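/- Under the hypotheses of the Gaussian beam construction of Proposition A1 (Y(0) = I, N(0) = M₀ with M₀ symmetric), the matrix M(s) = N(s)Y(s)⁻¹ is symmetric for all s. More precisely: if (Y, N) solves the linear system Ẏ = BY + CN, Ṅ = -AY - BᵀN with A(s), C(s) symmetric real matrices, Y(s) invertible for all s, and N(0)Y(0)⁻¹ symmetric, then N(s)Y(s)⁻¹ is symmetric for all s. -/

import Mathlib

open Matrix

attribute [local instance] Matrix.normedAddCommGroup Matrix.normedSpace

private lemma entry_hasDerivAt' {f : ℝ → Matrix (Fin 2) (Fin 2) ℂ} {f' : Matrix (Fin 2) (Fin 2) ℂ}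
    {s : ℝ} (hf : HasDerivAt f f' s) (i j : Fin 2) :
    HasDerivAt (fun t => f t i j) (f' i j) s :=
  hasDerivAt_pi.mp (hasDerivAt_pi.mp hf i) j

private lemma matrix_hasDerivAt_mul {f g : ℝ → Matrix (Fin 2) (Fin 2) ℂ}
    {f' g' : Matrix (Fin 2) (Fin 2) ℂ} {s : ℝ}
    (hf : HasDerivAt f f' s) (hg : HasDerivAt g g' s) :
    HasDerivAt (fun t => f t * g t) (f' * g s + f s * g') s := by
  apply hasDerivAt_pi.mpr; intro i; rw [hasDerivAt_pi]; intro j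
  have : HasDerivAt (fun t => ∑ k, f t i k * g t k j)
      (∑ k, (f' i k * g s k j + f s i k * g' k j)) s :=
    HasDerivAt.fun_sum fun k _ =>
      (entry_hasDerivAt' hf i k).mul (entry_hasDerivAt' hg k j)
  have heq : (∑ k, (f' i k * g s k j + f s i k * g' k j))
      = (f' * g s + f s * g') i j := by
    simp [Matrix.mul_apply, Matrix.add_apply, Finset.sum_add_distrib]
  rw [heq] at this
  convert this using 2
  case e'_4 => rfl
  case e'_8 => exact Matrix.mul_apply

private lemma matrix_hasDerivAt_transpose {f : ℝ → Matrix (Fin 2) (Fin 2) ℂ}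
    {f' : Matrix (Fin 2) (Fin 2) ℂ} {s : ℝ} (hf : HasDerivAt f f' s) :
    HasDerivAt (fun t => (f t)ᵀ) f'ᵀ s := by
  apply hasDerivAt_pi.mpr; intro i; rw [hasDerivAt_pi]; intro j
  simpa using entry_hasDerivAt' hf j i

/-- If `(Y, N)` solves `Ẏ = BY + CN`, `Ṅ = -AY - BᵀN` with `A s`, `C s` symmetric real
matrices, `Y s` invertible for all `s`, and `N 0 * (Y 0)⁻¹` symmetric, then
`M s = N s * (Y s)⁻¹` is symmetric for all `s`. -/
theorem riccati_solution_symmetric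
    (A B C : ℝ → Matrix (Fin 2) (Fin 2) ℝ)
    (hA : Continuous A) (hB : Continuous B) (hC : Continuous C)
    (hAsymm : ∀ s, (A s)ᵀ = A s) (hCsymm : ∀ s, (C s)ᵀ = C s)
    (Y N : ℝ → Matrix (Fin 2) (Fin 2) ℂ)
    (hY : ∀ s, HasDerivAt Y ((B s).map Complex.ofReal * Y s + (C s).map Complex.ofReal * N s) s)
    (hN : ∀ s, HasDerivAt N
      (-((A s).map Complex.ofReal * Y s) - ((B s)ᵀ).map Complex.ofReal * N s) s)
    (hinv : ∀ s, IsUnit (Y s))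
    (hM0 : (N 0 * (Y 0)⁻¹)ᵀ = N 0 * (Y 0)⁻¹) :
    ∀ s, (N s * (Y s)⁻¹)ᵀ = N s * (Y s)⁻¹ := by
  -- Wronskian W = Yᵀ N - Nᵀ Y
  set W : ℝ → Matrix (Fin 2) (Fin 2) ℂ := fun t => (Y t)ᵀ * N t - (N t)ᵀ * Y t with hWdef
  have hdet : ∀ s, IsUnit (Y s).det := fun s =>
    (Matrix.isUnit_iff_isUnit_det (Y s)).mp (hinv s)
  have hW : ∀ s, HasDerivAt W 0 s := by
    intro s
    have h1 := (matrix_hasDerivAt_mul (matrix_hasDerivAt_transpose (hY s)) (hN s)).sub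
      (matrix_hasDerivAt_mul (matrix_hasDerivAt_transpose (hN s)) (hY s))
    convert h1 using 1
    case e'_4 => rfl
    case e'_5 => rfl
    case e'_6 => rfl
    case e'_8 => rfl
    set A' := (A s).map (Complex.ofReal : ℝ → ℂ)
    set B' := (B s).map (Complex.ofReal : ℝ → ℂ)
    set C' := (C s).map (Complex.ofReal : ℝ → ℂ)
    have hA' : A'ᵀ = A' := by
      simp only [A', ← Matrix.transpose_map, hAsymm]
    have hC' : C'ᵀ = C' := by
      simp only [C', ← Matrix.transpose_map, hCsymm]
    have hB' : ((B s)ᵀ).map (Complex.ofReal : ℝ → ℂ) = B'ᵀ := by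
      simp only [B', Matrix.transpose_map]
    rw [hB']
    simp only [Matrix.transpose_add, Matrix.transpose_mul, Matrix.transpose_neg,
      Matrix.transpose_sub, Matrix.transpose_transpose, hA', hC']
    noncomm_ring
  have hWconst : ∀ s, W s = W 0 := by
    intro s
    exact is_const_of_deriv_eq_zero (fun t => (hW t).differentiableAt)
      (fun t => (hW t).deriv) s 0
  have hW0 : W 0 = 0 := by
    have h1 : ((Y 0)⁻¹)ᵀ * (N 0)ᵀ = N 0 * (Y 0)⁻¹ := by
      rw [← Matrix.transpose_mul]; exact hM0
    have hdT : IsUnit ((Y 0)ᵀ).det := by rw [Matrix.det_transpose]; exact hdet 0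
    have key : (N 0)ᵀ * Y 0 = (Y 0)ᵀ * N 0 := by
      calc (N 0)ᵀ * Y 0
          = (Y 0)ᵀ * (((Y 0)⁻¹)ᵀ * (N 0)ᵀ) * Y 0 := by
            rw [Matrix.transpose_nonsing_inv, ← Matrix.mul_assoc,
              Matrix.mul_nonsing_inv _ hdT, Matrix.one_mul]
        _ = (Y 0)ᵀ * (N 0 * (Y 0)⁻¹) * Y 0 := by rw [h1]
        _ = (Y 0)ᵀ * N 0 := by
            rw [Matrix.mul_assoc ((Y 0)ᵀ), Matrix.mul_assoc (N 0),
              Matrix.nonsing_inv_mul _ (hdet 0), Matrix.mul_one]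
    simp [hWdef, key]
  intro s
  have hWs : (Y s)ᵀ * N s = (N s)ᵀ * Y s :=
    sub_eq_zero.mp ((hWconst s).trans hW0)
  have hdTs : IsUnit ((Y s)ᵀ).det := by rw [Matrix.det_transpose]; exact hdet s
  calc (N s * (Y s)⁻¹)ᵀ
      = ((Y s)ᵀ)⁻¹ * (N s)ᵀ := by
        rw [Matrix.transpose_mul, Matrix.transpose_nonsing_inv]
    _ = ((Y s)ᵀ)⁻¹ * ((N s)ᵀ * Y s) * (Y s)⁻¹ := by
        rw [Matrix.mul_assoc _ ((N s)ᵀ * Y s), Matrix.mul_assoc ((N s)ᵀ),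
          Matrix.mul_nonsing_inv _ (hdet s), Matrix.mul_one]
    _ = ((Y s)ᵀ)⁻¹ * ((Y s)ᵀ * N s) * (Y s)⁻¹ := by rw [hWs]
    _ = N s * (Y s)⁻¹ := by
        rw [← Matrix.mul_assoc, Matrix.nonsing_inv_mul _ hdTs, Matrix.one_mul]
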